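/- Let n ≥ 1 and suppose r = n+1, with a₁, …, a_{n+1} ∈ ℤ, K₁, …, K_{n+1} ∈ ℤ \ {0}, and Σ_i a_i^t / K_i = 0 for t = 0, …, n−1. Then exactly one of the following holds: (a) the a_i are pairwise distinct and Σ_i a_i^n / K_i ≠ 0; (b) no value occurs exactly once among the a_i and Σ_i a_i^n / K_i = 0. -/

import Mathlib

open Finset

theorem stmt7 (n : ℕ) (hn : 1 ≤ n) (a : Fin (n + 1) → ℤ) (K : Fin (n + 1) → ℤ)
    (hK : ∀ i, K i ≠ 0)
    (h : ∀ t : ℕ, t ≤ n - 1 → ∑ i, ((a i : ℤ) : ℚ) ^ t / (K i : ℚ) = 0) :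
    Xor'
      (Function.Injective a ∧ ∑ i, ((a i : ℤ) : ℚ) ^ n / (K i : ℚ) ≠ 0)
      ((∀ s : ℤ, (Finset.univ.filter (fun i => a i = s)).card ≠ 1) ∧
        ∑ i, ((a i : ℤ) : ℚ) ^ n / (K i : ℚ) = 0) := by
  have hKQ : ∀ i, (K i : ℚ) ≠ 0 := fun i => Int.cast_ne_zero.mpr (hK i)
  by_cases hinj : Function.Injective a
  · -- case (a)
    have hSne : ∑ i, ((a i : ℤ) : ℚ) ^ n / (K i : ℚ) ≠ 0 := by
      intro hS0
      have hf : Function.Injective (fun i => ((a i : ℤ) : ℚ)) := by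
        intro i j hij
        dsimp only at hij
        exact hinj (by exact_mod_cast hij)
      have hz : (fun i => (1 : ℚ) / (K i : ℚ)) = 0 := by
        apply Matrix.eq_zero_of_forall_pow_sum_mul_pow_eq_zero hf
        intro t
        rcases lt_or_eq_of_le (Nat.lt_succ_iff.mp t.2) with ht | ht
        · have := h t (Nat.le_pred_of_lt ht)
          simpa [div_eq_mul_inv, one_div, mul_comm] using this
        · rw [ht]
          simpa [div_eq_mul_inv, one_div, mul_comm] using hS0
      have h0 : (1 : ℚ) / (K 0 : ℚ) = 0 := congrFun hz 0
      exact one_div_ne_zero (hKQ 0) h0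
    left
    refine ⟨⟨hinj, hSne⟩, fun hr => ?_⟩
    apply hr.1 (a 0)
    have : (Finset.univ.filter (fun i => a i = a 0)) = {0} := by
      ext i; simp [hinj.eq_iff]
    rw [this]; simp
  · -- case (b)
    set T := Finset.image a Finset.univ with hT
    have hle : T.card ≤ n + 1 := by
      simpa using Finset.card_image_le (s := (Finset.univ : Finset (Fin (n+1)))) (f := a)
    have hne : T.card ≠ n + 1 := by
      intro hc
      apply hinj
      intro i j hij
      have hinjOn := Finset.injOn_of_card_image_eq (f := a)
        (s := (Finset.univ : Finset (Fin (n+1)))) (by simpa using hc)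
      exact hinjOn (Finset.mem_coe.mpr (Finset.mem_univ i)) (Finset.mem_coe.mpr (Finset.mem_univ j)) hij
    have hl : T.card ≤ n := Nat.lt_succ_iff.mp (lt_of_le_of_ne hle hne)
    set l := T.card with hlcard
    let e : Fin l ≃o {x // x ∈ T} := T.orderIsoOfFin rfl
    set A : Fin l → ℚ := fun j =>
      ∑ i ∈ Finset.univ.filter (fun i => a i = ((e j : ℤ))), 1 / (K i : ℚ) with hA
    -- key partition identity
    have key : ∀ t : ℕ, ∑ j : Fin l, A j * (((e j : ℤ) : ℚ)) ^ t
        = ∑ i, ((a i : ℤ) : ℚ) ^ t / (K i : ℚ) := by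
      intro t
      have step1 : ∀ j : Fin l, A j * (((e j : ℤ) : ℚ)) ^ t
          = ∑ i ∈ Finset.univ.filter (fun i => a i = ((e j : ℤ))),
              ((a i : ℤ) : ℚ) ^ t / (K i : ℚ) := by
        intro j
        rw [hA, Finset.sum_mul]
        apply Finset.sum_congr rfl
        intro i hi
        have : a i = (e j : ℤ) := (Finset.mem_filter.mp hi).2
        rw [this]; ring
      rw [Finset.sum_congr rfl (fun j _ => step1 j)]
      have reindex : ∑ j : Fin l, ∑ i ∈ Finset.univ.filter (fun i => a i = ((e j : ℤ))),
            ((a i : ℤ) : ℚ) ^ t / (K i : ℚ)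
          = ∑ s ∈ T, ∑ i ∈ Finset.univ.filter (fun i => a i = s),
            ((a i : ℤ) : ℚ) ^ t / (K i : ℚ) := by
        rw [← Finset.sum_coe_sort T]
        exact Fintype.sum_equiv e.toEquiv _ _ (fun j => rfl)
      rw [reindex]
      apply Finset.sum_fiberwise_of_maps_to
      intro i _
      exact Finset.mem_image_of_mem a (Finset.mem_univ i)
    have hvinj : Function.Injective (fun j : Fin l => (((e j : ℤ)) : ℚ)) := by
      intro i j hij
      dsimp only at hij
      apply e.injective
      exact Subtype.ext (by exact_mod_cast hij)
    have hAzero : A = 0 := by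
      apply Matrix.eq_zero_of_forall_pow_sum_mul_pow_eq_zero hvinj
      intro t
      rw [key t]
      apply h
      have htl : (t : ℕ) < l := t.2
      exact Nat.le_pred_of_lt (lt_of_lt_of_le htl hl)
    have hS0 : ∑ i, ((a i : ℤ) : ℚ) ^ n / (K i : ℚ) = 0 := by
      rw [← key n, hAzero]
      simp
    right
    constructor
    · refine ⟨fun s hs => ?_, hS0⟩
      obtain ⟨i, hi⟩ := Finset.card_eq_one.mp hs
      have hai : a i = s := by
        have : i ∈ Finset.univ.filter (fun i => a i = s) := by rw [hi]; simp
        exact (Finset.mem_filter.mp this).2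
      have hsT : s ∈ T := hai ▸ Finset.mem_image_of_mem a (Finset.mem_univ i)
      set j := e.symm ⟨s, hsT⟩ with hj
      have hej : (e j : ℤ) = s := by rw [hj, OrderIso.apply_symm_apply]
      have : A j = 1 / (K i : ℚ) := by
        rw [hA]
        simp only [hej, hi, Finset.sum_singleton]
      rw [hAzero] at this
      exact one_div_ne_zero (hKQ i) this.symm
    · rintro ⟨hl', _⟩
      exact hinj hl'
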